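/- arXiv:2203.03066 — 2 statements merged into one kernel-verified Lean document; each statement's English description precedes it below -/
import Mathlib

section
/- For 0 < α < 1, the small-argument asymptotics 𝓔_α(z) = -α/(Γ(1+α) z^{1-α}) + O(z^{2α-1}) holds as z → 0⁺; in particular z^{1-α} 𝓔_α(z) → -α/Γ(1+α) as z → 0⁺. -/
open Filter Asymptotics

private lemma two_pow_le_fact (n : ℕ) : 2 ^ n ≤ (n + 1).factorial := by
  induction n with
  | zero => simp
  | succ n ih =>
    rw [pow_succ, Nat.factorial_succ]
    calc 2 ^ n * 2 ≤ (n + 1).factorial * 2 := by gcongr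
      _ ≤ (n + 2) * (n + 1).factorial := by rw [mul_comm]; gcongr; omega

private lemma gamma_lb {α : ℝ} (hα : 0 < α) {k : ℕ} (hk : 2 ≤ α * k) :
    (2 : ℝ) ^ (α * k - 2) ≤ Real.Gamma (α * k + 1) := by
  set n := ⌊α * (k : ℝ)⌋₊ with hn
  have h02 : (0:ℝ) ≤ α * k := by linarith
  have hn2 : 2 ≤ n := Nat.le_floor (by exact_mod_cast hk)
  have hfl : (n : ℝ) ≤ α * k := Nat.floor_le h02
  have hfl' : α * k < n + 1 := Nat.lt_floor_add_one _
  have h1 : Real.Gamma ((n : ℝ) + 1) ≤ Real.Gamma (α * k + 1) := by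
    apply Real.Gamma_strictMonoOn_Ici.monotoneOn
    · simp only [Set.mem_Ici]
      have : (2:ℝ) ≤ (n:ℝ) := by exact_mod_cast hn2
      linarith
    · simp only [Set.mem_Ici]; linarith
    · linarith
  have h2 : Real.Gamma ((n : ℝ) + 1) = (n.factorial : ℝ) := Real.Gamma_nat_eq_factorial n
  have h3 : (2 : ℝ) ^ (n - 1 : ℕ) ≤ (n.factorial : ℝ) := by
    have := two_pow_le_fact (n - 1)
    have hn1 : n - 1 + 1 = n := by omega
    rw [hn1] at this
    exact_mod_cast this
  have h4 : (2 : ℝ) ^ (α * k - 2) ≤ (2 : ℝ) ^ ((n - 1 : ℕ) : ℝ) := by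
    apply Real.rpow_le_rpow_left_iff (by norm_num : (1:ℝ) < 2) |>.2
    have : ((n - 1 : ℕ) : ℝ) = (n : ℝ) - 1 := by
      have : 1 ≤ n := by omega
      push_cast [this]; ring
    rw [this]; linarith
  calc (2 : ℝ) ^ (α * k - 2) ≤ (2 : ℝ) ^ ((n - 1 : ℕ) : ℝ) := h4
    _ = (2 : ℝ) ^ (n - 1 : ℕ) := Real.rpow_natCast 2 _
    _ ≤ (n.factorial : ℝ) := h3
    _ = Real.Gamma ((n : ℝ) + 1) := h2.symm
    _ ≤ Real.Gamma (α * k + 1) := h1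

private lemma g_summable {α : ℝ} (hα : 0 < α) :
    Summable (fun k : ℕ => (k : ℝ) / Real.Gamma (α * k + 1)) := by
  set r : ℝ := (2 : ℝ) ^ (-α) with hr
  have hr0 : 0 < r := Real.rpow_pos_of_pos (by norm_num) _
  have hr1 : r < 1 := Real.rpow_lt_one_of_one_lt_of_neg (by norm_num) (by linarith)
  have hsum : Summable (fun k : ℕ => 4 * ((k : ℝ) ^ 1 * r ^ k)) :=
    (summable_pow_mul_geometric_of_norm_lt_one (R := ℝ) 1
      (by rw [Real.norm_eq_abs, abs_of_pos hr0]; exact hr1)).mul_left 4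
  apply summable_of_isBigO_nat hsum
  rw [isBigO_iff]
  refine ⟨1, ?_⟩
  have hmem : ∀ᶠ k : ℕ in atTop, 2 ≤ α * k := by
    filter_upwards [eventually_ge_atTop ⌈2 / α⌉₊] with k hk
    have h1 : 2 / α ≤ (k : ℝ) := le_trans (Nat.le_ceil _) (by exact_mod_cast hk)
    calc (2:ℝ) = α * (2 / α) := by field_simp
      _ ≤ α * k := by gcongr
  filter_upwards [hmem] with k hk
  have hΓ : (0:ℝ) < Real.Gamma (α * k + 1) := Real.Gamma_pos_of_pos (by positivity)
  have hlb := gamma_lb hα hk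
  have hpow : (2 : ℝ) ^ (α * k - 2) = (1 / 4) * (1 / r ^ k) := by
    rw [Real.rpow_sub (by norm_num : (0:ℝ) < 2)]
    rw [show α * (k:ℝ) = -(-α * k) by ring, Real.rpow_neg (by norm_num : (0:ℝ) ≤ 2)]
    rw [Real.rpow_mul (by norm_num : (0:ℝ) ≤ 2), Real.rpow_natCast]
    rw [hr]
    norm_num
    ring
  have hk0 : (0:ℝ) ≤ (k:ℝ) := Nat.cast_nonneg k
  rw [Real.norm_eq_abs, Real.norm_eq_abs, abs_of_nonneg (by positivity),
    abs_of_nonneg (by positivity)]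
  rw [div_le_iff₀ hΓ]
  have hrk : (r:ℝ) ^ k ≠ 0 := (pow_pos hr0 k).ne'
  have heq : 1 * (4 * ((k:ℝ) ^ 1 * r ^ k)) * ((1/4) * (1 / r ^ k)) = k := by
    field_simp
  calc (k:ℝ) = 1 * (4 * ((k:ℝ) ^ 1 * r ^ k)) * ((1/4) * (1 / r ^ k)) := heq.symm
    _ ≤ 1 * (4 * ((k:ℝ) ^ 1 * r ^ k)) * Real.Gamma (α * k + 1) := by
        rw [← hpow]; gcongr

/-- `𝓔_α(z) = (α/z) ∑_{k≥1} (-1)^k k z^{αk} / Γ(αk+1)`, the derivative of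
`z ↦ E_α(-z^α)` for `z > 0`. -/
noncomputable def calE (α z : ℝ) : ℝ :=
  (α / z) * ∑' k : ℕ, (-1 : ℝ) ^ k * k * z ^ (α * (k : ℝ)) / Real.Gamma (α * k + 1)

/-- Small-argument asymptotics for `0 < α < 1`:
`𝓔_α(z) = -α/(Γ(1+α) z^{1-α}) + O(z^{2α-1})` as `z → 0⁺`; in particular
`z^{1-α} 𝓔_α(z) → -α/Γ(1+α)` as `z → 0⁺`. -/
theorem calE_small_asymptotics (α : ℝ) (hα : 0 < α) (hα1 : α < 1) :
    (fun z : ℝ => calE α z + α / (Real.Gamma (1 + α) * z ^ (1 - α)))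
        =O[nhdsWithin 0 (Set.Ioi 0)] (fun z : ℝ => z ^ (2 * α - 1)) ∧
    Tendsto (fun z : ℝ => z ^ (1 - α) * calE α z) (nhdsWithin 0 (Set.Ioi 0))
      (nhds (-(α / Real.Gamma (1 + α)))) := by
  have hΓα : 0 < Real.Gamma (α + 1) := Real.Gamma_pos_of_pos (by linarith)
  have hΓ1α : Real.Gamma (1 + α) = Real.Gamma (α + 1) := by rw [add_comm]
  set g : ℕ → ℝ := fun k => (k : ℝ) / Real.Gamma (α * k + 1) with hg
  have hgsum : Summable g := g_summable hα
  have hgpos : ∀ k, 0 ≤ g k := fun k => div_nonneg (Nat.cast_nonneg k)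
      (Real.Gamma_pos_of_pos (by positivity)).le
  set C : ℝ := ∑' k : ℕ, g (k + 2) with hC
  have hgsum2 : Summable (fun k : ℕ => g (k + 2)) := (summable_nat_add_iff 2).2 hgsum
  have hC0 : 0 ≤ C := tsum_nonneg fun k => hgpos _
  have key : ∀ z ∈ Set.Ioo (0:ℝ) 1,
      |calE α z + α / (Real.Gamma (1 + α) * z ^ (1 - α))| ≤ α * C * z ^ (2 * α - 1) := by
    intro z hz
    obtain ⟨hz0, hz1⟩ := hz
    set x : ℝ := z ^ α with hx
    have hx0 : 0 < x := Real.rpow_pos_of_pos hz0 α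
    have hx1 : x < 1 := Real.rpow_lt_one hz0.le hz1 hα
    set h : ℕ → ℝ := fun k => (-1 : ℝ) ^ k * (g k * x ^ k) with hh
    have hf : ∀ k : ℕ, (-1 : ℝ) ^ k * k * z ^ (α * (k : ℝ)) / Real.Gamma (α * k + 1)
        = h k := by
      intro k
      rw [hh, hg, hx]
      simp only []
      rw [Real.rpow_mul hz0.le, Real.rpow_natCast]
      ring
    have hnorm : ∀ k : ℕ, ‖h k‖ = g k * x ^ k := by
      intro k
      rw [hh]
      simp only []
      rw [norm_mul, norm_pow, norm_neg, norm_one, one_pow, one_mul, Real.norm_eq_abs,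
        abs_of_nonneg (mul_nonneg (hgpos k) (pow_nonneg hx0.le k))]
    have hsumgx : Summable (fun k : ℕ => g k * x ^ k) := by
      refine hgsum.of_nonneg_of_le
        (fun k => mul_nonneg (hgpos k) (pow_nonneg hx0.le k)) (fun k => ?_)
      calc g k * x ^ k ≤ g k * 1 :=
            mul_le_mul_of_nonneg_left (pow_le_one₀ hx0.le hx1.le) (hgpos k)
        _ = g k := mul_one _
    have hsh : Summable h := by
      refine Summable.of_norm ?_
      exact hsumgx.congr fun k => (hnorm k).symm
    have hsh1 : Summable (fun k => h (k + 1)) := (summable_nat_add_iff 1).2 hsh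
    have hsh2 : Summable (fun k => h (k + 2)) := (summable_nat_add_iff 2).2 hsh
    have hsplit : (∑' k : ℕ, (-1 : ℝ) ^ k * k * z ^ (α * (k : ℝ)) / Real.Gamma (α * k + 1))
        = -(x / Real.Gamma (α + 1)) + ∑' k : ℕ, h (k + 2) := by
      rw [tsum_congr hf, Summable.tsum_eq_zero_add hsh, Summable.tsum_eq_zero_add hsh1]
      have h0 : h 0 = 0 := by simp [hh, hg]
      have h1 : h (0 + 1) = -(x / Real.Gamma (α + 1)) := by
        simp [hh, hg]
        ring
      rw [h0, h1, zero_add]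
    have hz1a : z ^ (1 - α) = z / x := by
      rw [hx, Real.rpow_sub hz0, Real.rpow_one]
    have hcal : calE α z + α / (Real.Gamma (1 + α) * z ^ (1 - α))
        = (α / z) * ∑' k, h (k + 2) := by
      rw [calE, hsplit, hz1a, hΓ1α]
      have hzne : z ≠ 0 := hz0.ne'
      have hxne : x ≠ 0 := hx0.ne'
      field_simp
      ring
    have hTb : ‖∑' k, h (k + 2)‖ ≤ C * x ^ 2 := by
      calc ‖∑' k, h (k + 2)‖ ≤ ∑' k, ‖h (k + 2)‖ := by
            apply norm_tsum_le_tsum_norm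
            exact ((summable_nat_add_iff 2).2 hsumgx).congr fun k => (hnorm (k + 2)).symm
        _ ≤ ∑' k : ℕ, g (k + 2) * x ^ 2 := by
            refine Summable.tsum_le_tsum (fun k => ?_)
              (((summable_nat_add_iff 2).2 hsumgx).congr fun k => (hnorm (k + 2)).symm)
              (hgsum2.mul_right (x ^ 2))
            rw [hnorm (k + 2)]
            calc g (k + 2) * x ^ (k + 2) = g (k + 2) * (x ^ k * x ^ 2) := by ring
              _ ≤ g (k + 2) * (1 * x ^ 2) :=
                  mul_le_mul_of_nonneg_left (mul_le_mul_of_nonneg_right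
                    (pow_le_one₀ hx0.le hx1.le) (by positivity)) (hgpos _)
              _ = g (k + 2) * x ^ 2 := by ring
        _ = C * x ^ 2 := tsum_mul_right
    have hx2 : x ^ 2 = z ^ (2 * α) := by
      rw [hx, ← Real.rpow_natCast (z ^ α) 2, ← Real.rpow_mul hz0.le]
      norm_num [mul_comm]
    rw [hcal, abs_mul, abs_of_pos (by positivity : (0:ℝ) < α / z)]
    have hT : |∑' k, h (k + 2)| ≤ C * z ^ (2 * α) := by
      rw [← hx2]; exact hTb
    calc (α / z) * |∑' k, h (k + 2)| ≤ (α / z) * (C * z ^ (2 * α)) := by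
          gcongr
      _ = α * C * z ^ (2 * α - 1) := by
          rw [Real.rpow_sub hz0, Real.rpow_one]
          field_simp
  have hO : (fun z : ℝ => calE α z + α / (Real.Gamma (1 + α) * z ^ (1 - α)))
      =O[nhdsWithin 0 (Set.Ioi 0)] fun z : ℝ => z ^ (2 * α - 1) := by
    rw [isBigO_iff]
    refine ⟨α * C, ?_⟩
    filter_upwards [Ioo_mem_nhdsGT_of_mem (Set.mem_Ico.2 ⟨le_refl (0:ℝ), zero_lt_one⟩)]
      with z hz
    rw [Real.norm_eq_abs, Real.norm_eq_abs, abs_of_pos (Real.rpow_pos_of_pos hz.1 _)]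
    exact key z hz
  refine ⟨hO, ?_⟩
  have hzα : Tendsto (fun z : ℝ => z ^ α) (nhdsWithin 0 (Set.Ioi 0)) (nhds 0) := by
    have h1 := (Real.continuousAt_rpow_const 0 α (Or.inr hα.le)).tendsto
    rw [Real.zero_rpow hα.ne'] at h1
    exact h1.mono_left nhdsWithin_le_nhds
  have hO2 : (fun z : ℝ => z ^ (1 - α) * (calE α z + α / (Real.Gamma (1 + α) * z ^ (1 - α))))
      =O[nhdsWithin 0 (Set.Ioi 0)] fun z : ℝ => z ^ α := by
    have h1 : (fun z : ℝ => z ^ (1 - α)) =O[nhdsWithin 0 (Set.Ioi 0)]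
        fun z : ℝ => z ^ (1 - α) := isBigO_refl _ _
    refine (h1.mul hO).trans (EventuallyEq.isBigO ?_)
    filter_upwards [self_mem_nhdsWithin] with z hz
    rw [← Real.rpow_add hz]
    congr 1
    ring
  rw [← tendsto_sub_nhds_zero_iff]
  have hev : (fun z : ℝ => z ^ (1 - α) * (calE α z + α / (Real.Gamma (1 + α) * z ^ (1 - α))))
      =ᶠ[nhdsWithin 0 (Set.Ioi 0)]
      fun z : ℝ => z ^ (1 - α) * calE α z - -(α / Real.Gamma (1 + α)) := by
    filter_upwards [self_mem_nhdsWithin] with z hz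
    have hz0 : (0:ℝ) < z := hz
    have hne : z ^ (1 - α) ≠ 0 := (Real.rpow_pos_of_pos hz0 _).ne'
    have hΓne : Real.Gamma (1 + α) ≠ 0 := by rw [hΓ1α]; exact hΓα.ne'
    field_simp
    ring
  exact (hO2.trans_tendsto hzα).congr' hev
end

section
/- For α > 0 and Re s > 1, the Laplace transform of t ↦ t^{α-1} E_{α,α}(t^α) equals 1/(s^α - 1). -/
open MeasureTheory Real Set


/-- Two-parameter Mittag-Leffler function `E_{α,β}(x) = ∑_{k≥0} x^k / Γ(αk+β)`. -/
noncomputable def mlE2 (α β x : ℝ) : ℝ :=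
  ∑' k : ℕ, x ^ k / Real.Gamma (α * k + β)

/-- For `α > 0` and `s > 1`, the Laplace transform of `t ↦ t^{α-1} E_{α,α}(t^α)`
equals `1/(s^α - 1)`. -/
theorem laplace_mittagLeffler (α s : ℝ) (hα : 0 < α) (hs : 1 < s) :
    ∫ t in Set.Ioi (0 : ℝ), t ^ (α - 1) * mlE2 α α (t ^ α) * Real.exp (-(s * t))
      = 1 / (s ^ α - 1) := by
  have hs0 : 0 < s := lt_trans one_pos hs
  set F : ℕ → ℝ → ℝ := fun k t =>
    t ^ (α * (k + 1) - 1) * Real.exp (-(s * t)) / Real.Gamma (α * (k + 1)) with hF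
  set r : ℝ := (1 / s) ^ α with hr
  have hrpos : 0 < r := rpow_pos_of_pos (by positivity) α
  have hr1 : r < 1 := by
    rw [hr]
    exact rpow_lt_one (by positivity) (by rw [div_lt_one hs0]; exact hs) hα
  have hak : ∀ k : ℕ, 0 < α * ((k : ℝ) + 1) := by
    intro k; positivity
  -- integrability of each F k
  have hint : ∀ k : ℕ, IntegrableOn (F k) (Ioi 0) := by
    intro k
    have h := integrableOn_rpow_mul_exp_neg_mul_rpow
      (s := α * ((k : ℝ) + 1) - 1) (p := 1) (b := s)
      (by linarith [hak k]) one_pos hs0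
    have h' : IntegrableOn (fun t : ℝ => t ^ (α * ((k : ℝ) + 1) - 1) * Real.exp (-(s * t)))
        (Ioi 0) := by
      refine h.congr_fun (fun t ht => ?_) measurableSet_Ioi
      beta_reduce
      rw [rpow_one, neg_mul]
    exact h'.div_const _
  -- value of each integral
  have hval : ∀ k : ℕ, ∫ t in Ioi 0, F k t = r ^ (k + 1) := by
    intro k
    simp only [hF]
    rw [integral_div, integral_rpow_mul_exp_neg_mul_Ioi (hak k) hs0,
      mul_div_assoc, div_self (Real.Gamma_pos_of_pos (hak k)).ne', mul_one]
    rw [hr, ← rpow_natCast ((1 / s) ^ α) (k + 1), ← rpow_mul (by positivity)]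
    push_cast
    ring_nf
  -- norms
  have hnorm : ∀ k : ℕ, ∫ t in Ioi 0, ‖F k t‖ = r ^ (k + 1) := by
    intro k
    rw [← hval k]
    refine setIntegral_congr_fun measurableSet_Ioi (fun t ht => ?_)
    rw [mem_Ioi] at ht
    have : 0 ≤ F k t := by
      simp only [hF]
      have h1 := (Real.Gamma_pos_of_pos (hak k))
      have h2 : 0 ≤ t ^ (α * ((k:ℝ) + 1) - 1) := rpow_nonneg ht.le _
      positivity
    exact Real.norm_of_nonneg this
  have hsum : Summable fun k : ℕ => ∫ t in Ioi 0, ‖F k t‖ := by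
    simp_rw [hnorm, pow_succ]
    exact (summable_geometric_of_lt_one hrpos.le hr1).mul_right r
  -- swap
  have hswap := integral_tsum_of_summable_integral_norm (μ := volume.restrict (Ioi 0)) hint hsum
  -- pointwise identity
  have hpt : ∀ t ∈ Ioi (0:ℝ),
      t ^ (α - 1) * mlE2 α α (t ^ α) * Real.exp (-(s * t)) = ∑' k, F k t := by
    intro t ht
    rw [mem_Ioi] at ht
    rw [mlE2, ← tsum_mul_left, ← tsum_mul_right]
    refine tsum_congr fun k => ?_
    simp only [hF]
    have h1 : (t ^ α) ^ k = t ^ (α * k) := by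
      rw [← rpow_natCast (t ^ α) k, ← rpow_mul ht.le]
    rw [h1, show α * (k:ℝ) + α = α * ((k:ℝ) + 1) by ring,
      show α * ((k:ℝ) + 1) - 1 = (α - 1) + α * (k:ℝ) by ring, Real.rpow_add ht]
    ring
  rw [setIntegral_congr_fun measurableSet_Ioi hpt, ← hswap]
  simp_rw [hval, pow_succ']
  rw [tsum_mul_left, tsum_geometric_of_lt_one hrpos.le hr1]
  have hsα : 1 < s ^ α := (Real.one_lt_rpow_iff_of_pos hs0).mpr (Or.inl ⟨hs, hα⟩)
  have hre : r = (s ^ α)⁻¹ := by rw [hr, one_div, Real.inv_rpow hs0.le]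
  rw [hre]
  have h0 : s ^ α ≠ 0 := by positivity
  have h1 : s ^ α - 1 ≠ 0 := by linarith
  field_simp
end
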